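/- Let α, e be epsilon numbers and s an ordinal with s < α⁺ and Ep(s) ∩ α ⊆ e. If s = a + c for ordinals a, c, then Ep(c) ∩ α ⊆ e. -/

import Mathlib

open Ordinal

def IsEps (x : Ordinal.{0}) : Prop := omega0 ^ x = x

noncomputable def nextEps (x : Ordinal.{0}) : Ordinal.{0} := sInf {e | IsEps e ∧ x < e}

inductive InEp : Ordinal.{0} → Ordinal.{0} → Prop
  | self (x : Ordinal.{0}) (h : omega0 ^ x = x) : InEp x x
  | exp (x e c y : Ordinal.{0}) (h : omega0 ^ x ≠ x) (hm : (e, c) ∈ CNF omega0 x)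
      (hy : InEp y e) : InEp y x

/-- The set of epsilon numbers appearing in the iterated Cantor normal form of `x`. -/
def Ep (x : Ordinal.{0}) : Set Ordinal.{0} := {y | InEp y x}

lemma add_absorb_mul {x L q : Ordinal} (hx : x < omega0 ^ L) (hq : q ≠ 0) :
    x + omega0 ^ L * q = omega0 ^ L * q := by
  obtain ⟨q', rfl⟩ : ∃ q', q = 1 + q' :=
    ⟨q - 1, (Ordinal.add_sub_cancel_of_le (Ordinal.one_le_iff_ne_zero.2 hq)).symm⟩
  rw [mul_add, mul_one, ← add_assoc, add_omega0_opow hx]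

lemma CNF_omega0_head {u v w : Ordinal} (hv : v ≠ 0) (hvω : v < omega0) (hw : w < omega0 ^ u) :
    CNF omega0 (omega0 ^ u * v + w) = (u, v) :: CNF omega0 w := by
  have h0 : omega0 ^ u * v + w ≠ 0 := fun h =>
    (mul_ne_zero (opow_ne_zero u omega0_ne_zero) hv) (by
      rcases Ordinal.add_eq_zero_iff.1 h with ⟨h1, _⟩; exact h1)
  have hlog : log omega0 (omega0 ^ u * v + w) = u := by
    rw [log_opow_mul_add one_lt_omega0 hv hw, log_eq_zero hvω, add_zero]
  rw [CNF.ne_zero h0, hlog, mul_add_div _ (opow_ne_zero u omega0_ne_zero),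
    div_eq_zero_of_lt hw, add_zero, mul_add_mod_self, mod_eq_of_lt hw]

lemma key (s : Ordinal) : ∀ a c, s = a + c → ∀ p ∈ CNF omega0 c,
    ∃ k, (p.1, k) ∈ CNF omega0 s := by
  induction s using Ordinal.induction with
  | h s IH =>
  intro a c hac p hp
  rcases eq_or_ne c 0 with rfl | hc
  · simp [CNF.zero_right] at hp
  have hs0 : s ≠ 0 := by
    rintro rfl
    exact hc (Ordinal.add_eq_zero_iff.1 hac.symm).2
  set L := log omega0 s with hL
  set Lc := log omega0 c with hLc
  have hcs : c ≤ s := hac ▸ le_add_self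
  have has : a ≤ s := hac ▸ le_self_add
  have hωL : omega0 ^ L ≤ s := opow_log_le_self omega0 hs0
  have hsbig : s < omega0 ^ Order.succ L := lt_opow_succ_log_self one_lt_omega0 s
  have hLcL : Lc ≤ L := log_mono_right _ hcs
  rcases eq_or_lt_of_le hLcL with hEq | hLt
  · -- Lc = L : leading exponents equal
    set m := c / omega0 ^ L with hm
    set r := c % omega0 ^ L with hr
    have hm0 : m ≠ 0 := by
      have := div_opow_log_pos omega0 hc
      rw [← hLc, hEq] at this
      exact this.ne'
    have hmω : m < omega0 := by
      rw [hm, div_lt (opow_ne_zero L omega0_ne_zero), ← opow_succ]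
      exact (hcs.trans_lt hsbig)
    have hrlt : r < omega0 ^ L := mod_lt c (opow_ne_zero L omega0_ne_zero)
    have hcdecomp : c = omega0 ^ L * m + r := (div_add_mod c _).symm
    set qa := a / omega0 ^ L with hqa
    have hadecomp : a = omega0 ^ L * qa + a % omega0 ^ L := (div_add_mod a _).symm
    have hqaω : qa < omega0 := by
      rw [hqa, div_lt (opow_ne_zero L omega0_ne_zero), ← opow_succ]
      exact has.trans_lt hsbig
    have hramod : a % omega0 ^ L < omega0 ^ L := mod_lt a (opow_ne_zero L omega0_ne_zero)
    have hsdecomp : s = omega0 ^ L * (qa + m) + r := by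
      rw [hac, hcdecomp, hadecomp]
      rw [mul_add, add_assoc, ← add_assoc (a % omega0 ^ L),
        add_absorb_mul hramod hm0, ← add_assoc]
    have hQ0 : qa + m ≠ 0 := fun h => hm0 (Ordinal.add_eq_zero_iff.1 h).2
    have hQω : qa + m < omega0 := principal_add_omega0 hqaω hmω
    have hCNFs : CNF omega0 s = (L, qa + m) :: CNF omega0 r := by
      rw [hsdecomp]; exact CNF_omega0_head hQ0 hQω hrlt
    have hCNFc : CNF omega0 c = (L, m) :: CNF omega0 r := by
      rw [hcdecomp]; exact CNF_omega0_head hm0 hmω hrlt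
    rw [hCNFc, List.mem_cons] at hp
    rcases hp with rfl | hp
    · exact ⟨qa + m, by rw [hCNFs]; exact List.mem_cons_self⟩
    · exact ⟨p.2, by rw [hCNFs]; exact List.mem_cons_of_mem _ hp⟩
  · -- Lc < L
    have hcsmall : c < omega0 ^ L := by
      calc c < omega0 ^ Order.succ Lc := lt_opow_succ_log_self one_lt_omega0 c
        _ ≤ omega0 ^ L := opow_le_opow_right omega0_pos (Order.succ_le_of_lt hLt)
    have ha0 : a ≠ 0 := by
      rintro rfl
      rw [zero_add] at hac
      exact hLt.ne (by rw [hLc, hL, hac])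
    have hLa : log omega0 a = L := by
      apply le_antisymm (log_mono_right _ has)
      by_contra h
      push_neg at h
      have hasmall : a < omega0 ^ L :=
        (lt_opow_succ_log_self one_lt_omega0 a).trans_le
          (opow_le_opow_right omega0_pos (Order.succ_le_of_lt h))
      exact absurd (hac ▸ principal_add_omega0_opow L hasmall hcsmall) (not_lt.2 hωL)
    set qa := a / omega0 ^ L with hqa
    have hqa0 : qa ≠ 0 := by
      have := div_opow_log_pos omega0 ha0
      rw [hLa] at this
      exact this.ne'
    have hqaω : qa < omega0 := by
      rw [hqa, div_lt (opow_ne_zero L omega0_ne_zero), ← opow_succ]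
      exact has.trans_lt hsbig
    have hramod : a % omega0 ^ L < omega0 ^ L := mod_lt a (opow_ne_zero L omega0_ne_zero)
    have hrc : a % omega0 ^ L + c < omega0 ^ L := principal_add_omega0_opow L hramod hcsmall
    have hsdecomp : s = omega0 ^ L * qa + (a % omega0 ^ L + c) := by
      rw [hac]
      conv_lhs => rw [← div_add_mod a (omega0 ^ L)]
      rw [add_assoc]
    have hCNFs : CNF omega0 s = (L, qa) :: CNF omega0 (a % omega0 ^ L + c) := by
      rw [hsdecomp]; exact CNF_omega0_head hqa0 hqaω hrc
    have hlt : a % omega0 ^ L + c < s := hrc.trans_le hωL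
    obtain ⟨k, hk⟩ := IH _ hlt (a % omega0 ^ L) c rfl p hp
    exact ⟨k, by rw [hCNFs]; exact List.mem_cons_of_mem _ hk⟩

lemma CNF_eps {c : Ordinal} (h : omega0 ^ c = c) : CNF omega0 c = [(c, 1)] := by
  conv_lhs => rw [show c = omega0 ^ c * 1 + 0 by rw [mul_one, add_zero, h]]
  rw [CNF_omega0_head one_ne_zero one_lt_omega0 (opow_pos c omega0_pos), CNF.zero_right]

lemma InEp_add {s a c y : Ordinal} (hac : s = a + c) (hy : InEp y c) : InEp y s := by
  have finish : ∀ e' k, (e', k) ∈ CNF omega0 s → InEp y e' → InEp y s := by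
    intro e' k hk hy'
    by_cases hss : omega0 ^ s = s
    · rw [CNF_eps hss, List.mem_singleton, Prod.mk.injEq] at hk
      exact hk.1 ▸ hy'
    · exact InEp.exp s e' k y hss hk hy'
  cases hy with
  | self x h =>
    obtain ⟨k, hk⟩ := key s a c hac (c, 1) (by rw [CNF_eps h]; exact List.mem_singleton_self _)
    exact finish c k hk (InEp.self c h)
  | exp x e' cc y h hm hy' =>
    obtain ⟨k, hk⟩ := key s a c hac (e', cc) hm
    exact finish e' k hk hy'

/-- If s < α⁺, Ep(s) ∩ α ⊆ e and s = a + c, then Ep(c) ∩ α ⊆ e. -/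
theorem Ep_right_summand (α e s a c : Ordinal.{0}) (hα : IsEps α) (he : IsEps e)
    (hs : s < nextEps α) (hse : Ep s ∩ Set.Iio α ⊆ Set.Iio e)
    (hac : s = a + c) : Ep c ∩ Set.Iio α ⊆ Set.Iio e := by
  exact fun y hy => hse ⟨InEp_add hac hy.1, hy.2⟩
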